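/- Let K ∈ ℝ^{n×n}, Ỹ ∈ ℝ^{n×c}, Ω ⊆ {1,…,n}×{1,…,c}, λ ≥ 0, and let S₁, …, S_c ⊆ {1,…,n} be index sets whose union is all of {1,…,n}; for each k let K_k denote the row-submatrix of K consisting of the rows with index in S_k. Then for every matrix A ∈ ℝ^{n×c}, the objective value (1/2)·∑_{(i,j)∈Ω} ((KA)_{ij} − Ỹ_{ij})² + λ·(∑_{k=1}^c ‖K_k A‖_* − ‖K A‖_*) is nonnegative. -/

import Mathlib

/-- The nuclear norm of a real matrix `M`: the trace of the positive
semidefinite square root of `Mᵀ * M`. -/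
noncomputable def nuclearNorm {m n : Type*} [Fintype m] [Fintype n] [DecidableEq n]
    (M : Matrix m n ℝ) : ℝ :=
  ((Matrix.posSemidef_conjTranspose_mul_self M).1.eigenvectorUnitary.1 *
      Matrix.diagonal ((RCLike.ofReal : ℝ → ℝ) ∘ (√·) ∘ (Matrix.posSemidef_conjTranspose_mul_self M).1.eigenvalues) *
      (star (Matrix.posSemidef_conjTranspose_mul_self M).1.eigenvectorUnitary :
        Matrix n n ℝ)).trace

/-- The row-submatrix of `M` consisting of the rows whose index lies in `S`. -/
def rowSubmatrix {n m : Type*} (M : Matrix n m ℝ) (S : Finset n) :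
    Matrix {i // i ∈ S} m ℝ :=
  M.submatrix (fun i => (i : n)) id

open Matrix

namespace NucAux


variable {m n : Type*} [Fintype m] [Fintype n] [DecidableEq n]


lemma diag_nonneg {A : Matrix n n ℝ} (hA : A.PosSemidef) (i : n) : 0 ≤ A i i := by
  exact hA.diag_nonneg

lemma nuclearNorm_eq_sum (M : Matrix m n ℝ) :
    nuclearNorm M =
      ∑ i, Real.sqrt ((Matrix.posSemidef_conjTranspose_mul_self M).1.eigenvalues i) := by
  set hG := Matrix.posSemidef_conjTranspose_mul_self M
  set V : Matrix n n ℝ := (hG.1.eigenvectorUnitary : Matrix n n ℝ)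
  have hVV : star V * V = 1 := Unitary.coe_star_mul_self _
  rw [nuclearNorm, Matrix.trace_mul_cycle]
  show ((star V * V) * _).trace = _
  rw [hVV, one_mul, Matrix.trace_diagonal]
  simp [RCLike.ofReal_real_eq_id]

lemma trace_le_nuclearNorm (M N : Matrix m n ℝ)
    (hN : (1 - Nᴴ * N).PosSemidef) : (Nᴴ * M).trace ≤ nuclearNorm M := by
  set hG := Matrix.posSemidef_conjTranspose_mul_self M with hGdef
  set V : Matrix n n ℝ := (hG.1.eigenvectorUnitary : Matrix n n ℝ) with hVdef
  have hVV : star V * V = 1 := Unitary.coe_star_mul_self _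
  have hVV' : V * star V = 1 := Unitary.coe_mul_star_self _
  have hdiag : star V * (Mᴴ * M) * V
      = diagonal (RCLike.ofReal ∘ hG.1.eigenvalues) := by
    have := hG.1.conjStarAlgAut_star_eigenvectorUnitary
    rwa [Unitary.conjStarAlgAut_apply, Unitary.coe_star, star_star] at this
  have key : (Nᴴ * M).trace = ((N * V)ᴴ * (M * V)).trace := by
    have h2 : (N * V)ᴴ * (M * V) = Vᴴ * (Nᴴ * M) * V := by
      rw [conjTranspose_mul]
      show Vᴴ * Nᴴ * (M * V) = _
      simp only [Matrix.mul_assoc]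
    rw [h2, Matrix.trace_mul_cycle, show V * Vᴴ = 1 from hVV', one_mul]
  rw [key, nuclearNorm_eq_sum, Matrix.trace]
  apply Finset.sum_le_sum
  intro i _
  have hentry : ((N * V)ᴴ * (M * V)).diag i
      = ∑ j, (N * V) j i * (M * V) j i := by
    simp [Matrix.diag, Matrix.mul_apply, Matrix.conjTranspose_apply, mul_comm]
  -- bound on ∑ (N*V) j i ^ 2
  have hNV : ((N * V)ᴴ * (N * V)) i i ≤ 1 := by
    have hpsd : (Vᴴ * (1 - Nᴴ * N) * V).PosSemidef := hN.conjTranspose_mul_mul_same V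
    have hexp : Vᴴ * (1 - Nᴴ * N) * V = 1 - (N * V)ᴴ * (N * V) := by
      have h1 : Vᴴ * (1 : Matrix n n ℝ) * V = 1 := by
        rw [mul_one]; exact hVV
      rw [conjTranspose_mul, mul_sub, sub_mul, h1]
      show _ - Vᴴ * (Nᴴ * N) * V = _ - Vᴴ * Nᴴ * (N * V)
      simp only [Matrix.mul_assoc]
    have := diag_nonneg (hexp ▸ hpsd) i
    have h1 : (1 : Matrix n n ℝ) i i = 1 := by simp
    simp only [Matrix.sub_apply, h1] at this
    linarith
  have hsqN : ∑ j, (N * V) j i ^ 2 ≤ 1 := by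
    have : ((N * V)ᴴ * (N * V)) i i = ∑ j, (N * V) j i ^ 2 := by
      simp [Matrix.mul_apply, Matrix.conjTranspose_apply, sq, mul_comm]
    linarith [hNV, this.symm.le]
  have hsqM : ∑ j, (M * V) j i ^ 2 = hG.1.eigenvalues i := by
    have h1 : ((M * V)ᴴ * (M * V)) i i = ∑ j, (M * V) j i ^ 2 := by
      simp [Matrix.mul_apply, Matrix.conjTranspose_apply, sq, mul_comm]
    have h2 : (M * V)ᴴ * (M * V) = star V * (Mᴴ * M) * V := by
      rw [conjTranspose_mul]
      show Vᴴ * Mᴴ * (M * V) = Vᴴ * (Mᴴ * M) * V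
      simp only [Matrix.mul_assoc]
    rw [← h1, h2, hdiag]
    simp [RCLike.ofReal_real_eq_id]
  have hnn : 0 ≤ ∑ j, (M * V) j i ^ 2 := Finset.sum_nonneg fun _ _ => sq_nonneg _
  rw [hentry]
  calc ∑ j, (N * V) j i * (M * V) j i
      ≤ |∑ j, (N * V) j i * (M * V) j i| := le_abs_self _
    _ = Real.sqrt ((∑ j, (N * V) j i * (M * V) j i) ^ 2) := (Real.sqrt_sq_eq_abs _).symm
    _ ≤ Real.sqrt ((∑ j, (N * V) j i ^ 2) * ∑ j, (M * V) j i ^ 2) :=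
        Real.sqrt_le_sqrt (Finset.sum_mul_sq_le_sq_mul_sq _ _ _)
    _ ≤ Real.sqrt (1 * hG.1.eigenvalues i) := by
        apply Real.sqrt_le_sqrt
        rw [hsqM] at hnn ⊢
        exact mul_le_mul_of_nonneg_right hsqN hnn
    _ = Real.sqrt (hG.1.eigenvalues i) := by rw [one_mul]

lemma exists_dual (M : Matrix m n ℝ) :
    ∃ N : Matrix m n ℝ, (1 - Nᴴ * N).PosSemidef ∧ (Nᴴ * M).trace = nuclearNorm M := by
  set hG := Matrix.posSemidef_conjTranspose_mul_self M with hGdef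
  set V : Matrix n n ℝ := (hG.1.eigenvectorUnitary : Matrix n n ℝ) with hVdef
  set μ : n → ℝ := hG.1.eigenvalues with hμdef
  have hμ0 : ∀ i, 0 ≤ μ i := hG.eigenvalues_nonneg
  have hVV : star V * V = 1 := Unitary.coe_star_mul_self _
  have hVV' : V * star V = 1 := Unitary.coe_mul_star_self _
  have hdiag : star V * (Mᴴ * M) * V = diagonal μ := by
    have := hG.1.conjStarAlgAut_star_eigenvectorUnitary
    rw [Unitary.conjStarAlgAut_apply, Unitary.coe_star, star_star] at this
    rw [this]
    congr 1
  have hspec : Mᴴ * M = V * diagonal μ * Vᴴ := by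
    have := hG.1.spectral_theorem
    rw [this]
    congr 1
  set e : n → ℝ := fun i => if μ i = 0 then 0 else (Real.sqrt (μ i))⁻¹ with hedef
  refine ⟨M * V * diagonal e * Vᴴ, ?_, ?_⟩
  · have hNt : (M * V * diagonal e * Vᴴ)ᴴ = V * diagonal e * Vᴴ * Mᴴ := by
      simp only [conjTranspose_mul, conjTranspose_conjTranspose, diagonal_conjTranspose]
      have : star e = e := by funext i; simp
      rw [this]
      simp only [Matrix.mul_assoc]
    have hNN : (M * V * diagonal e * Vᴴ)ᴴ * (M * V * diagonal e * Vᴴ)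
        = V * diagonal (fun i => e i ^ 2 * μ i) * Vᴴ := by
      rw [hNt]
      have : V * diagonal e * Vᴴ * Mᴴ * (M * V * diagonal e * Vᴴ)
          = V * diagonal e * ((Vᴴ * (Mᴴ * M) * V) * diagonal e) * Vᴴ := by
        simp only [Matrix.mul_assoc]
      rw [this, show (Vᴴ : Matrix n n ℝ) = star V from rfl, hdiag,
        diagonal_mul_diagonal, Matrix.mul_assoc V (diagonal e), diagonal_mul_diagonal]
      have : (fun i => e i * (μ i * e i)) = fun i => e i ^ 2 * μ i := by
        funext i; ring
      rw [this, Matrix.mul_assoc]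
    rw [hNN]
    have h1 : (1 : Matrix n n ℝ) = V * 1 * Vᴴ := by
      rw [mul_one]; exact hVV'.symm
    rw [h1, ← Matrix.sub_mul, ← Matrix.mul_sub]
    have hdd : (1 : Matrix n n ℝ) - diagonal (fun i => e i ^ 2 * μ i)
        = diagonal (fun i => 1 - e i ^ 2 * μ i) := by
      rw [← diagonal_one, diagonal_sub]
    rw [hdd]
    apply Matrix.PosSemidef.mul_mul_conjTranspose_same
    refine posSemidef_diagonal_iff.mpr fun i => ?_
    by_cases h : μ i = 0
    · simp [e, h]
    · have hpos : 0 < μ i := lt_of_le_of_ne (hμ0 i) (Ne.symm h)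
      have : e i ^ 2 * μ i = 1 := by
        rw [hedef]
        simp only [h, if_false]
        rw [← Real.sqrt_inv, Real.sq_sqrt (by positivity), inv_mul_cancel₀ h]
      rw [this]
      norm_num
  · have hNt : (M * V * diagonal e * Vᴴ)ᴴ = V * diagonal e * Vᴴ * Mᴴ := by
      simp only [conjTranspose_mul, conjTranspose_conjTranspose, diagonal_conjTranspose]
      have : star e = e := by funext i; simp
      rw [this]
      simp only [Matrix.mul_assoc]
    rw [hNt]
    have : V * diagonal e * Vᴴ * Mᴴ * M
        = V * (diagonal e * (Vᴴ * (Mᴴ * M))) := by simp only [Matrix.mul_assoc]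
    rw [this, hspec]
    have h2 : Vᴴ * (V * diagonal μ * Vᴴ) = diagonal μ * Vᴴ := by
      rw [show (Vᴴ : Matrix n n ℝ) = star V from rfl]
      simp only [← Matrix.mul_assoc, hVV, one_mul]
    rw [h2]
    have h3 : diagonal e * (diagonal μ * Vᴴ) = diagonal (fun i => e i * μ i) * Vᴴ := by
      rw [← Matrix.mul_assoc, diagonal_mul_diagonal]
    rw [h3, ← Matrix.mul_assoc, Matrix.trace_mul_cycle]
    show ((star V * V) * _).trace = _
    rw [hVV, one_mul, Matrix.trace_diagonal, nuclearNorm_eq_sum]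
    apply Finset.sum_congr rfl
    intro i _
    by_cases h : μ i = 0
    · rw [hedef]
      simp only [h, if_true, zero_mul]
      change 0 = Real.sqrt (μ i)
      rw [h, Real.sqrt_zero]
    · have hpos : 0 < μ i := lt_of_le_of_ne (hμ0 i) (Ne.symm h)
      rw [hedef]
      simp only [h, if_false, ← hμdef]
      have hs : Real.sqrt (μ i) ≠ 0 := by positivity
      rw [← Real.mul_self_sqrt hpos.le]
      field_simp
      rw [Real.sqrt_sq (Real.sqrt_nonneg _)]

lemma nuclearNorm_le_sum {n c : ℕ} (K : Matrix (Fin n) (Fin n) ℝ)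
    (S : Fin c → Finset (Fin n)) (hS : ∀ i : Fin n, ∃ k : Fin c, i ∈ S k)
    (A : Matrix (Fin n) (Fin c) ℝ) :
    nuclearNorm (K * A) ≤
      ∑ k : Fin c, nuclearNorm ((rowSubmatrix K (S k)) * A) := by
  choose g hg using hS
  obtain ⟨N₀, hN₀, htr⟩ := exists_dual (K * A)
  set D : Fin c → Matrix (Fin n) (Fin n) ℝ :=
    fun k => diagonal (fun i => if g i = k then (1 : ℝ) else 0) with hDdef
  have hDsum : ∑ k, D k = (1 : Matrix (Fin n) (Fin n) ℝ) := by
    ext i j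
    rw [Matrix.sum_apply]
    by_cases h : i = j
    · subst h
      simp [hDdef, Matrix.diagonal_apply, Matrix.one_apply]
    · simp [hDdef, Matrix.diagonal_apply_ne _ h, Matrix.one_apply_ne h]
  have key : ∀ k, (N₀ᴴ * (D k * (K * A))).trace
      ≤ nuclearNorm ((rowSubmatrix K (S k)) * A) := by
    intro k
    set F : Matrix (Fin n) {i // i ∈ S k} ℝ :=
      Matrix.of (fun i j => if (j : Fin n) = i then (1 : ℝ) else 0) with hFdef
    have hFK : Fᴴ * K = rowSubmatrix K (S k) := by
      ext j l
      simp only [Matrix.mul_apply, Matrix.conjTranspose_apply, hFdef, Matrix.of_apply,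
        Matrix.submatrix_apply, id, rowSubmatrix]
      rw [Finset.sum_eq_single (j : Fin n)]
      · simp
      · intro b _ hb
        simp [Ne.symm hb]
      · simp
    have hFF : F * Fᴴ = diagonal (fun i => if i ∈ S k then (1 : ℝ) else 0) := by
      ext i i'
      simp only [Matrix.mul_apply, Matrix.conjTranspose_apply, hFdef, Matrix.of_apply,
        star_trivial]
      by_cases h : i = i'
      · subst h
        by_cases hi : i ∈ S k
        · rw [Finset.sum_eq_single (⟨i, hi⟩ : {x // x ∈ S k})]
          · simp [Matrix.diagonal_apply_eq, hi]
          · intro b _ hb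
            have : (b : Fin n) ≠ i := fun hbe => hb (Subtype.ext hbe)
            simp [this]
          · simp
        · rw [Finset.sum_eq_zero, Matrix.diagonal_apply_eq]
          · simp [hi]
          · intro b _
            have : (b : Fin n) ≠ i := fun hbe => hi (hbe ▸ b.2)
            simp [this]
      · rw [Finset.sum_eq_zero, Matrix.diagonal_apply_ne _ h]
        intro b _
        by_cases hb : (b : Fin n) = i
        · simp [hb, h]
        · simp [hb]
    have hDP : D k * diagonal (fun i => if i ∈ S k then (1 : ℝ) else 0) = D k := by
      rw [hDdef, diagonal_mul_diagonal]
      have hfun : (fun i => (if g i = k then (1 : ℝ) else 0) * (if i ∈ S k then (1 : ℝ) else 0))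
          = fun i => if g i = k then (1 : ℝ) else 0 := by
        funext i
        by_cases h : g i = k
        · simp [h, show i ∈ S k from h ▸ hg i]
        · simp [h]
      rw [hfun]
    have hDD : D k * D k = D k := by
      rw [hDdef, diagonal_mul_diagonal]
      have hfun : (fun i => (if g i = k then (1 : ℝ) else 0) * (if g i = k then (1 : ℝ) else 0))
          = fun i => if g i = k then (1 : ℝ) else 0 := by
        funext i
        by_cases h : g i = k <;> simp [h]
      rw [hfun]
    have hDH : (D k)ᴴ = D k := by
      rw [hDdef, diagonal_conjTranspose]
      have hfun : star (fun i => if g i = k then (1 : ℝ) else 0)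
          = fun i => if g i = k then (1 : ℝ) else 0 := by
        funext i
        simp
      rw [hfun]
    set Nk : Matrix {i // i ∈ S k} (Fin c) ℝ := Fᴴ * (D k * N₀) with hNkdef
    have hNkH : Nkᴴ = N₀ᴴ * (D k * F) := by
      rw [hNkdef, conjTranspose_mul, conjTranspose_mul, conjTranspose_conjTranspose, hDH,
        Matrix.mul_assoc]
    have claim1 : Nkᴴ * ((rowSubmatrix K (S k)) * A)
        = N₀ᴴ * (D k * (K * A)) := by
      rw [hNkH, ← hFK]
      have : D k * F * (Fᴴ * K) = D k * (F * Fᴴ) * K := by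
        simp only [Matrix.mul_assoc]
      rw [Matrix.mul_assoc, ← Matrix.mul_assoc (D k * F), this, hFF, hDP]
      simp only [Matrix.mul_assoc]
    have claim2 : (1 - Nkᴴ * Nk).PosSemidef := by
      have hNN : Nkᴴ * Nk = N₀ᴴ * (D k * N₀) := by
        rw [hNkH, hNkdef]
        have : D k * F * (Fᴴ * (D k * N₀)) = D k * (F * Fᴴ) * (D k * N₀) := by
          simp only [Matrix.mul_assoc]
        rw [Matrix.mul_assoc, this, hFF, hDP]
        have : D k * (D k * N₀) = (D k * D k) * N₀ := by simp only [Matrix.mul_assoc]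
        rw [this, hDD]
      rw [hNN]
      have hsplit : (1 : Matrix (Fin c) (Fin c) ℝ) - N₀ᴴ * (D k * N₀)
          = (1 - N₀ᴴ * N₀) + N₀ᴴ * (1 - D k) * N₀ := by
        rw [Matrix.mul_sub, Matrix.sub_mul, Matrix.mul_one]
        simp only [Matrix.mul_assoc]
        abel
      rw [hsplit]
      apply hN₀.add
      apply Matrix.PosSemidef.conjTranspose_mul_mul_same
      have : (1 : Matrix (Fin n) (Fin n) ℝ) - D k
          = diagonal (fun i => 1 - if g i = k then (1 : ℝ) else 0) := by
        rw [hDdef, ← diagonal_one, diagonal_sub]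
      rw [this]
      refine posSemidef_diagonal_iff.mpr fun i => ?_
      by_cases h : g i = k <;> simp [h]
    calc (N₀ᴴ * (D k * (K * A))).trace
        = (Nkᴴ * ((rowSubmatrix K (S k)) * A)).trace := by
          rw [claim1]
      _ ≤ _ := trace_le_nuclearNorm _ _ claim2
  calc nuclearNorm (K * A) = (N₀ᴴ * (K * A)).trace := htr.symm
    _ = ∑ k, (N₀ᴴ * (D k * (K * A))).trace := by
        rw [← Matrix.trace_sum]
        congr 1
        rw [← Matrix.mul_sum, ← Matrix.sum_mul, hDsum, Matrix.one_mul]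
    _ ≤ _ := Finset.sum_le_sum fun k _ => key k

end NucAux

theorem objective_nonneg (n c : ℕ) (K : Matrix (Fin n) (Fin n) ℝ)
    (Ytil : Matrix (Fin n) (Fin c) ℝ) (Ω : Finset (Fin n × Fin c))
    (lam : ℝ) (hlam : 0 ≤ lam) (S : Fin c → Finset (Fin n))
    (hS : ∀ i : Fin n, ∃ k : Fin c, i ∈ S k) (A : Matrix (Fin n) (Fin c) ℝ) :
    0 ≤ (1 / 2) * ∑ p ∈ Ω, ((K * A) p.1 p.2 - Ytil p.1 p.2) ^ 2 +
      lam * (∑ k : Fin c, nuclearNorm (rowSubmatrix K (S k) * A) -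
        nuclearNorm (K * A)) := by
  have h1 : 0 ≤ ∑ p ∈ Ω, ((K * A) p.1 p.2 - Ytil p.1 p.2) ^ 2 :=
    Finset.sum_nonneg fun _ _ => sq_nonneg _
  have h2 := NucAux.nuclearNorm_le_sum K S hS A
  have h3 : 0 ≤ lam * (∑ k : Fin c, nuclearNorm (rowSubmatrix K (S k) * A) -
      nuclearNorm (K * A)) := mul_nonneg hlam (sub_nonneg.mpr h2)
  linarith
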